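/- arXiv:2202.03386 — 3 statements merged into one kernel-verified Lean document; each statement's English description precedes it below -/
import Mathlib

section
/- Let Γ₀ > 2√(C+1) where C is the constant in the flow estimate for φ_τ*f. Then for all τ ≥ 0, the image φ_τ({x : Γ₀/2 < f(x) < Γ₀}) is contained in {x : e^τ < f(x) < Γ₀ e^τ}. -/
/-- Upper Gronwall: if `g' ≤ g` then `g τ ≤ g 0 * e^τ` for `τ ≥ 0`. -/
lemma aux_up (g d : ℝ → ℝ) (hd : ∀ t, HasDerivAt g (d t) t)
    (hup : ∀ t, d t ≤ g t) {τ : ℝ} (hτ : 0 ≤ τ) : g τ ≤ g 0 * Real.exp τ := by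
  set h : ℝ → ℝ := fun t => g t * Real.exp (-t) with hh
  have hdh : ∀ t, HasDerivAt h (d t * Real.exp (-t) + g t * (Real.exp (-t) * (-1))) t := by
    intro t
    exact (hd t).mul ((Real.hasDerivAt_exp (-t)).comp t (hasDerivAt_neg t))
  have hanti : Antitone h := by
    apply antitone_of_deriv_nonpos
    · intro t; exact (hdh t).differentiableAt
    · intro t
      rw [(hdh t).deriv]
      have := hup t
      have hexp : 0 < Real.exp (-t) := Real.exp_pos _
      nlinarith
  have hle := hanti hτ
  have h0 : h 0 = g 0 := by simp [hh]
  rw [h0] at hle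
  have hE : Real.exp (-τ) * Real.exp τ = 1 := by rw [← Real.exp_add]; simp
  have hepos : 0 < Real.exp τ := Real.exp_pos _
  have hle' : g τ * Real.exp (-τ) ≤ g 0 := hle
  calc g τ = g τ * Real.exp (-τ) * Real.exp τ := by rw [mul_assoc, hE, mul_one]
    _ ≤ g 0 * Real.exp τ := mul_le_mul_of_nonneg_right hle' hepos.le

/-- Monotonicity of `t ↦ (g t ^ 2 - C) * e^{-2t}` on an interval where `g ≥ √C`. -/
lemma aux_mono (C : ℝ) (g d : ℝ → ℝ)
    (hd : ∀ t, HasDerivAt g (d t) t) (hpos : ∀ t, 0 < g t)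
    (hlow : ∀ t, Real.sqrt C ≤ g t → g t - C / g t ≤ d t)
    {b : ℝ} (hb : 0 ≤ b) (hge : ∀ s ∈ Set.Icc 0 b, Real.sqrt C ≤ g s) :
    g 0 ^ 2 - C ≤ (g b ^ 2 - C) * Real.exp (-(2 * b)) := by
  set H : ℝ → ℝ := fun t => (g t ^ 2 - C) * Real.exp (-(2 * t)) with hH
  have hdH : ∀ t, HasDerivAt H
      ((2 * g t * d t) * Real.exp (-(2 * t)) + (g t ^ 2 - C) * (Real.exp (-(2 * t)) * (-2))) t := by
    intro t
    have h1 : HasDerivAt (fun t => g t ^ 2 - C) (2 * g t * d t) t := by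
      have := ((hd t).pow 2).sub_const C
      simpa [mul_comm, mul_assoc, mul_left_comm] using this
    have h2 : HasDerivAt (fun t : ℝ => Real.exp (-(2 * t))) (Real.exp (-(2 * t)) * (-2)) t := by
      have hin : HasDerivAt (fun t : ℝ => -(2 * t)) (-2) t := by
        have h := ((hasDerivAt_id t).const_mul (2 : ℝ)).neg; rw [mul_one] at h; exact h
      exact (Real.hasDerivAt_exp (-(2 * t))).comp t hin
    exact h1.mul h2
  have hmono : MonotoneOn H (Set.Icc 0 b) := by
    apply monotoneOn_of_hasDerivWithinAt_nonneg (convex_Icc 0 b)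
      (fun t _ => (hdH t).continuousAt.continuousWithinAt)
      (fun t ht => (hdH t).hasDerivWithinAt)
    intro t ht
    rw [interior_Icc] at ht
    have htI : t ∈ Set.Icc 0 b := Set.mem_Icc.2 ⟨ht.1.le, ht.2.le⟩
    have hDl := hlow t (hge t htI)
    have hgpos := hpos t
    have hkey : g t ^ 2 - C ≤ g t * d t := by
      have h' := mul_le_mul_of_nonneg_left hDl hgpos.le
      have hcancel : g t * (g t - C / g t) = g t ^ 2 - C := by
        field_simp
      nlinarith
    have hexp : 0 < Real.exp (-(2 * t)) := Real.exp_pos _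
    nlinarith
  have := hmono (Set.left_mem_Icc.2 hb) (Set.right_mem_Icc.2 hb) hb
  simpa [hH] using this

/-- `g` stays above `√(C+1)` forever. -/
lemma aux_stay (C : ℝ) (hC : 0 < C) (g d : ℝ → ℝ)
    (hd : ∀ t, HasDerivAt g (d t) t) (hpos : ∀ t, 0 < g t)
    (hlow : ∀ t, Real.sqrt C ≤ g t → g t - C / g t ≤ d t)
    (h0 : Real.sqrt (C + 1) < g 0) :
    ∀ t, 0 ≤ t → Real.sqrt (C + 1) ≤ g t := by
  have hC1 : (0 : ℝ) ≤ C + 1 := by linarith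
  have hsq1 : Real.sqrt (C + 1) ^ 2 = C + 1 := Real.sq_sqrt hC1
  have hsqrt_le : Real.sqrt C ≤ Real.sqrt (C + 1) := Real.sqrt_le_sqrt (by linarith)
  have hgcont : Continuous g := by
    rw [continuous_iff_continuousAt]; exact fun t => (hd t).continuousAt
  by_contra hcon
  push_neg at hcon
  obtain ⟨t, ht0, htlt⟩ := hcon
  set bad : Set ℝ := {s | s ∈ Set.Icc 0 t ∧ g s ≤ Real.sqrt (C + 1)} with hbad
  have hclosed : IsClosed bad := by
    have : bad = Set.Icc 0 t ∩ g ⁻¹' Set.Iic (Real.sqrt (C + 1)) := by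
      ext s; simp [hbad, Set.mem_Icc]
    rw [this]
    exact isClosed_Icc.inter (IsClosed.preimage hgcont isClosed_Iic)
  have hne : bad.Nonempty := ⟨t, ⟨Set.mem_Icc.2 ⟨ht0, le_refl t⟩, htlt.le⟩⟩
  have hbdd : BddBelow bad := ⟨0, fun s hs => hs.1.1⟩
  set t₀ := sInf bad with ht₀
  have ht₀mem : t₀ ∈ bad := hclosed.csInf_mem hne hbdd
  have ht₀0 : 0 ≤ t₀ := ht₀mem.1.1
  have ht₀pos : 0 < t₀ := by
    rcases ht₀0.lt_or_eq with h | h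
    · exact h
    · exfalso; rw [← h] at ht₀mem; exact absurd ht₀mem.2 (not_le.2 h0)
  have hbefore : ∀ s, 0 ≤ s → s < t₀ → Real.sqrt (C + 1) ≤ g s := by
    intro s hs0 hst
    by_contra hlt
    push_neg at hlt
    have : s ∈ bad := ⟨Set.mem_Icc.2 ⟨hs0, hst.le.trans ht₀mem.1.2⟩, hlt.le⟩
    exact absurd (csInf_le hbdd this) (not_le.2 hst)
  have ht₀ge : Real.sqrt (C + 1) ≤ g t₀ := by
    have htend : Filter.Tendsto g (nhdsWithin t₀ (Set.Iio t₀)) (nhds (g t₀)) :=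
      (hgcont.tendsto t₀).mono_left nhdsWithin_le_nhds
    refine ge_of_tendsto htend ?_
    filter_upwards [Ioo_mem_nhdsLT_of_mem (Set.mem_Ioc.2 ⟨ht₀pos, le_refl t₀⟩)] with s hs
    exact hbefore s hs.1.le hs.2
  have hge : ∀ s ∈ Set.Icc 0 t₀, Real.sqrt C ≤ g s := by
    intro s hs
    rcases hs.2.lt_or_eq with h | h
    · exact hsqrt_le.trans (hbefore s hs.1 h)
    · rw [h]; exact hsqrt_le.trans ht₀ge
  have hmono := aux_mono C g d hd hpos hlow ht₀0 hge
  have hgt₀ : g t₀ = Real.sqrt (C + 1) := le_antisymm ht₀mem.2 ht₀ge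
  have hexple : Real.exp (-(2 * t₀)) ≤ 1 := Real.exp_le_one_iff.2 (by linarith)
  have hg0sq : C + 1 < g 0 ^ 2 := by nlinarith [Real.sqrt_nonneg (C + 1)]
  rw [hgt₀, hsq1] at hmono
  have hexppos : 0 < Real.exp (-(2 * t₀)) := Real.exp_pos _
  nlinarith

/-- Let `Γ₀ > 2√(C+1)` where `C` is the constant in the flow estimate for
`φ_τ*f`.  Then for all `τ ≥ 0`,
`φ_τ({x : Γ₀/2 < f(x) < Γ₀}) ⊆ {x : e^τ < f(x) < Γ₀ e^τ}`.
Here `φ_τ` are the soliton diffeomorphisms with `φ_0 = id`, `F x τ = f(φ_τ(x))`,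
and `D x τ = ∂_τ F x τ` satisfies `∂_τ(φ_τ*f) ≤ φ_τ*f` and
`∂_τ(φ_τ*f) ≥ φ_τ*f - C/(φ_τ*f)` wherever `φ_τ*f ≥ √C`. -/
theorem statement14 (M : Type*) (C Γ₀ : ℝ) (hC : 0 < C)
    (hΓ : 2 * Real.sqrt (C + 1) < Γ₀)
    (f : M → ℝ) (φ : ℝ → M → M) (F D : M → ℝ → ℝ)
    (hFdef : ∀ x τ, F x τ = f (φ τ x))
    (hinit : ∀ x, φ 0 x = x)
    (hpos : ∀ x τ, 0 < F x τ)
    (hderiv : ∀ x τ, HasDerivAt (F x) (D x τ) τ)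
    (hup : ∀ x τ, D x τ ≤ F x τ)
    (hlow : ∀ x τ, Real.sqrt C ≤ F x τ → F x τ - C / F x τ ≤ D x τ) :
    ∀ τ : ℝ, 0 ≤ τ →
      φ τ '' {x | Γ₀ / 2 < f x ∧ f x < Γ₀}
        ⊆ {y | Real.exp τ < f y ∧ f y < Γ₀ * Real.exp τ} := by
  intro τ hτ y hy
  obtain ⟨x, ⟨hx1, hx2⟩, rfl⟩ := hy
  have hF0 : F x 0 = f x := by rw [hFdef, hinit]
  have hFτ : F x τ = f (φ τ x) := hFdef x τ
  have hC1 : (0 : ℝ) ≤ C + 1 := by linarith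
  have hsq1 : Real.sqrt (C + 1) ^ 2 = C + 1 := Real.sq_sqrt hC1
  have hs0 : Real.sqrt (C + 1) < F x 0 := by
    rw [hF0]; linarith
  constructor
  · -- lower bound
    have hstay := aux_stay C hC (F x) (D x) (hderiv x) (hpos x) (hlow x) hs0
    have hsqrt_le : Real.sqrt C ≤ Real.sqrt (C + 1) := Real.sqrt_le_sqrt (by linarith)
    have hge : ∀ s ∈ Set.Icc 0 τ, Real.sqrt C ≤ F x s :=
      fun s hs => hsqrt_le.trans (hstay s hs.1)
    have hmono := aux_mono C (F x) (D x) (hderiv x) (hpos x) (hlow x) hτ hge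
    have hE : Real.exp (-(2 * τ)) * (Real.exp τ * Real.exp τ) = 1 := by
      rw [← Real.exp_add, ← Real.exp_add]; ring_nf; exact Real.exp_zero
    have hg0sq : C + 1 < F x 0 ^ 2 := by nlinarith [Real.sqrt_nonneg (C + 1)]
    -- from hmono : F x 0 ^2 - C ≤ (F x τ ^ 2 - C) * exp(-(2τ))
    have hsq : Real.exp τ * Real.exp τ < F x τ ^ 2 := by
      have hexppos : 0 < Real.exp (-(2 * τ)) := Real.exp_pos _
      nlinarith [Real.exp_pos τ]
    have hFpos := hpos x τ
    have hepos := Real.exp_pos τ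
    show Real.exp τ < f (φ τ x)
    rw [← hFτ]
    nlinarith
  · -- upper bound
    have hub := aux_up (F x) (D x) (hderiv x) (hup x) hτ
    rw [hF0] at hub
    show f (φ τ x) < Γ₀ * Real.exp τ
    rw [← hFτ]
    have := Real.exp_pos τ
    nlinarith
end

section
/- Let (M^n, g, f) be a shrinking gradient Ricci soliton with scalar curvature R ≥ 0, f > 0, 0 ≤ |∇f|²/f ≤ 1, and Δ_f f = n/2 - f. Fix κ > 0 and constants A, B, ω > 0 with B - A(κ(κ + n/2) + 4C_n(1+ε) sup_M(|Rm| f)) ≥ ω. Then for Γ sufficiently large (depending on n, B, κ, ω) and γ sufficiently small (depending on n, M, g, A, B, κ, ω), the function u(x,τ) = e^{-κτ}(A f(x)^κ - B f(x)^{κ-1}) satisfies the supersolution inequality ∂_τ u ≥ (1 + C_n √u)Δu - ∇_{∇f}u + 4C_n(1+ε)|Rm| u on the region {(x,τ) : Γ < f(x) < γ e^τ}. -/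
set_option maxHeartbeats 1000000 in
/-- Let `(M^n, g, f)` be a shrinking gradient Ricci soliton with `R ≥ 0`,
`f > 0`, `0 ≤ |∇f|²/f ≤ 1`, and `Δ_f f = n/2 - f`.  Fix `κ > 0` and constants
`A, B, ω > 0` with `B - A(κ(κ + n/2) + 4C_n(1+ε) sup_M(|Rm| f)) ≥ ω`.  Then for `Γ`
sufficiently large and `γ` sufficiently small, the function
`u(x,τ) = e^{-κτ}(A f^κ - B f^{κ-1})` satisfies
`∂_τ u ≥ (1 + C_n √u) Δu - ∇_{∇f}u + 4 C_n (1+ε) |Rm| u`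
on the region `{(x,τ) : Γ < f(x) < γ e^τ}`.
Here `w2 = |∇f|²` and `lapf = Δf`; the chain-rule identities
`Δ(f^κ) = κ f^{κ-1}Δf + κ(κ-1) f^{κ-2}|∇f|²` and `⟨∇(f^κ), ∇f⟩ = κ f^{κ-1}|∇f|²`
express `Δu`, `∇_{∇f}u` and `∂_τ u = -κ u` in terms of the soliton data. -/
theorem statement15 (M : Type*) (n : ℕ) (Cn ε : ℝ)
    (hCn : 0 < Cn) (hε : ε ∈ Set.Ioo (0 : ℝ) 1)
    (f R w2 lapf normRm : M → ℝ) (SRm : ℝ)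
    (hR : ∀ x, 0 ≤ R x) (hfpos : ∀ x, 0 < f x)
    (hw2 : ∀ x, 0 ≤ w2 x ∧ w2 x ≤ f x)
    -- the traced soliton equation `Δf = n/2 - R` (equivalently `Δ_f f = n/2 - f`)
    (hlap : ∀ x, lapf x = (n : ℝ) / 2 - R x)
    (hfdecomp : ∀ x, R x + w2 x = f x)
    (hRm0 : ∀ x, 0 ≤ normRm x)
    -- quadratic curvature decay: `sup_M (|Rm| f) ≤ SRm`
    (hSRm : ∀ x, normRm x * f x ≤ SRm)
    (κ A B ω : ℝ) (hκ : 0 < κ) (hA : 0 < A) (hB : 0 < B) (hω : 0 < ω)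
    (hAB : ω ≤ B - A * (κ * (κ + (n : ℝ) / 2) + 4 * Cn * (1 + ε) * SRm)) :
    ∃ Γ γ : ℝ, 0 < Γ ∧ 0 < γ ∧
      ∀ (x : M) (τ : ℝ), Γ < f x → f x < γ * Real.exp τ →
        -- `∂_τ u ≥ (1 + C_n √u) Δu - ∇_{∇f} u + 4 C_n (1+ε)|Rm| u`
        (1 + Cn * Real.sqrt (Real.exp (-κ * τ) * (A * f x ^ κ - B * f x ^ (κ - 1))))
            * (Real.exp (-κ * τ) *
                (A * (κ * f x ^ (κ - 1) * lapf x
                        + κ * (κ - 1) * f x ^ (κ - 2) * w2 x)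
                  - B * ((κ - 1) * f x ^ (κ - 2) * lapf x
                        + (κ - 1) * (κ - 2) * f x ^ (κ - 3) * w2 x)))
          - Real.exp (-κ * τ) *
              (A * κ * f x ^ (κ - 1) - B * (κ - 1) * f x ^ (κ - 2)) * w2 x
          + 4 * Cn * (1 + ε) * normRm x *
              (Real.exp (-κ * τ) * (A * f x ^ κ - B * f x ^ (κ - 1)))
        ≤ -κ * (Real.exp (-κ * τ) * (A * f x ^ κ - B * f x ^ (κ - 1))) := by
  have hε1 : (0:ℝ) < 1 + ε := by have := hε.1; linarith
  have hn0 : (0:ℝ) ≤ (n:ℝ) := Nat.cast_nonneg n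
  obtain ⟨K, hKdef⟩ : ∃ K : ℝ,
      K = A*κ*((n:ℝ)/2) + A*κ* |κ-1| + B* |κ-1| *((n:ℝ)/2+1) + B* |κ-1| * |κ-2| + 1 :=
    ⟨_, rfl⟩
  have hK : 0 < K := by rw [hKdef]; positivity
  obtain ⟨c, hcdef⟩ : ∃ c : ℝ, c = ((ω/(4*K*Cn))^2)/A := ⟨_, rfl⟩
  have hc : 0 < c := by rw [hcdef]; positivity
  obtain ⟨γ, hγdef⟩ : ∃ γ : ℝ, γ = min 1 (c ^ (1/κ : ℝ)) := ⟨_, rfl⟩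
  have hγ0 : 0 < γ := by rw [hγdef]; exact lt_min one_pos (Real.rpow_pos_of_pos hc _)
  have hγκ : A * γ ^ κ ≤ (ω/(4*K*Cn))^2 := by
    have h1 : γ ^ κ ≤ (c ^ (1/κ:ℝ)) ^ κ := by
      rw [hγdef]
      exact Real.rpow_le_rpow (le_min zero_le_one (Real.rpow_pos_of_pos hc _).le)
        (min_le_right _ _) hκ.le
    have h2 : (c ^ (1/κ:ℝ)) ^ κ = c := by
      rw [← Real.rpow_mul hc.le, one_div, inv_mul_cancel₀ hκ.ne', Real.rpow_one]
    rw [h2] at h1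
    have h3 : A * γ ^ κ ≤ A * c := mul_le_mul_of_nonneg_left h1 hA.le
    have h4 : A * c = (ω/(4*K*Cn))^2 := by
      rw [hcdef]; field_simp
    linarith
  obtain ⟨Γ, hΓdef⟩ : ∃ Γ : ℝ, Γ = 1 + B/A + (8/ω)*(B* |κ-1| *((n:ℝ)/2 + |κ-2|)) := ⟨_, rfl⟩
  have hΓ0 : 0 < Γ := by rw [hΓdef]; positivity
  refine ⟨Γ, γ, hΓ0, hγ0, ?_⟩
  intro x τ hΓx hxγ
  set F := f x with hFdef
  have hF0 : 0 < F := hfpos x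
  set E := Real.exp (-κ*τ) with hEdef
  have hE : 0 < E := Real.exp_pos _
  set W := w2 x with hWdef
  set L := lapf x with hLdef
  set N := normRm x with hNdef
  have hW0 : 0 ≤ W := (hw2 x).1
  have hWF : W ≤ F := (hw2 x).2
  have hRx : R x = F - W := by have := hfdecomp x; linarith
  have hR0 : 0 ≤ R x := hR x
  have hRF : R x ≤ F := by rw [hRx]; linarith
  have hN0 : 0 ≤ N := hRm0 x
  have hNF : N * F ≤ SRm := hSRm x
  clear_value F E W L N
  have haux1 : (0:ℝ) ≤ B/A := by positivity
  have haux2 : (0:ℝ) ≤ (8/ω)*(B* |κ-1| *((n:ℝ)/2 + |κ-2|)) := by positivity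
  have hF1 : 1 < F := by rw [hΓdef] at hΓx; linarith
  have hBAF : B < A*F := by
    have h' : B/A < F := by rw [hΓdef] at hΓx; linarith
    have := (div_lt_iff₀ hA).mp h'
    linarith
  have hY : B* |κ-1| *((n:ℝ)/2 + |κ-2|) < ω/8 * F := by
    have h8 : (8/ω) * (B* |κ-1| *((n:ℝ)/2 + |κ-2|)) < F := by rw [hΓdef] at hΓx; linarith
    have h8' := mul_lt_mul_of_pos_left h8 hω
    rw [show ω * ((8/ω) * (B* |κ-1| *((n:ℝ)/2 + |κ-2|)))
        = 8*(B* |κ-1| *((n:ℝ)/2 + |κ-2|)) * (ω/ω) by ring, div_self hω.ne', mul_one] at h8'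
    linarith
  have hpos1 : (0:ℝ) ≤ B* |κ-1| * |κ-2| := by positivity
  have hpos2 : (0:ℝ) ≤ B* |κ-1| *((n:ℝ)/2) := by positivity
  have hY1 : B* |κ-1| *((n:ℝ)/2) ≤ ω/8 * F := by linarith only [hY, hpos1]
  have hY2 : B* |κ-1| * |κ-2| ≤ ω/8 * F := by linarith only [hY, hpos2]
  -- bound on the square root term
  have hFκ1pos : 0 < F ^ (κ-1) := Real.rpow_pos_of_pos hF0 _
  have huA : E * (A * F^κ - B * F^(κ-1)) ≤ (ω/(4*K*Cn))^2 := by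
    have hstep : F^κ ≤ γ^κ * Real.exp (τ*κ) := by
      have h1 : F^κ ≤ (γ * Real.exp τ)^κ := Real.rpow_le_rpow hF0.le hxγ.le hκ.le
      rw [Real.mul_rpow hγ0.le (Real.exp_nonneg τ), ← Real.exp_mul] at h1
      exact h1
    have hEE : E * Real.exp (τ*κ) = 1 := by
      rw [hEdef, ← Real.exp_add, show -κ*τ + τ*κ = 0 by ring, Real.exp_zero]
    have h2 : E * (A * F^κ - B*F^(κ-1)) ≤ E * (A * F^κ) := by
      have h2a : 0 < E * (B * F^(κ-1)) := mul_pos hE (mul_pos hB hFκ1pos)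
      linarith only [h2a]
    have h3 : E * (A * F^κ) ≤ E * (A * (γ^κ * Real.exp (τ*κ))) := by
      have h3a := mul_le_mul_of_nonneg_left hstep (mul_pos hE hA).le
      linarith only [h3a]
    have h4 : E * (A * (γ^κ * Real.exp (τ*κ))) = A * γ^κ := by
      calc E * (A * (γ^κ * Real.exp (τ*κ))) = A*γ^κ*(E*Real.exp (τ*κ)) := by ring
        _ = A * γ^κ := by rw [hEE, mul_one]
    linarith
  have hsb : Cn * Real.sqrt (E * (A * F^κ - B * F^(κ-1))) ≤ ω/(4*K) := by
    have h1 : Real.sqrt (E * (A*F^κ - B*F^(κ-1))) ≤ Real.sqrt ((ω/(4*K*Cn))^2) :=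
      Real.sqrt_le_sqrt huA
    rw [Real.sqrt_sq (by positivity : (0:ℝ) ≤ ω/(4*K*Cn))] at h1
    have h2 := mul_le_mul_of_nonneg_left h1 hCn.le
    have h3 : Cn * (ω/(4*K*Cn)) = ω/(4*K) := by
      field_simp
    linarith only [h2, h3]
  -- rewrite the real powers in terms of P = F^(κ-3)
  set P := F ^ (κ-3:ℝ) with hPdef
  have hP : 0 < P := Real.rpow_pos_of_pos hF0 _
  clear_value P
  have hp1 : F ^ (κ-2:ℝ) = P * F := by
    rw [hPdef, show κ-2 = (κ-3)+1 by ring, Real.rpow_add_one hF0.ne']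
  have hp2 : F ^ (κ-1:ℝ) = P * F * F := by
    rw [hPdef, show κ-1 = ((κ-3)+1)+1 by ring, Real.rpow_add_one hF0.ne',
      Real.rpow_add_one hF0.ne']
  have hp3 : F ^ (κ:ℝ) = P * F * F * F := by
    conv_lhs => rw [show (κ:ℝ) = (((κ-3)+1)+1)+1 by ring]
    rw [hPdef, Real.rpow_add_one hF0.ne', Real.rpow_add_one hF0.ne',
      Real.rpow_add_one hF0.ne']
  rw [hp3, hp2] at hsb
  rw [hp3, hp2, hp1]
  set s := Cn * Real.sqrt (E * (A * (P*F*F*F) - B * (P*F*F))) with hsdef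
  clear_value s
  have hs0 : 0 ≤ s := by
    rw [hsdef]; exact mul_nonneg hCn.le (Real.sqrt_nonneg _)
  -- bounds on L
  have hLle : L ≤ (n:ℝ)/2 := by rw [hLdef, hlap x]; linarith
  have hLge : (n:ℝ)/2 - F ≤ L := by rw [hLdef, hlap x]; linarith
  have hLabs : |L| ≤ (n:ℝ)/2 + F := abs_le.mpr ⟨by linarith, by linarith⟩
  have habs1 : κ - 1 ≤ |κ-1| := le_abs_self _
  have habs1' : -(κ-1) ≤ |κ-1| := neg_le_abs _
  have habs2' : -((κ-1)*(κ-2)) ≤ |κ-1| * |κ-2| := by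
    rw [← abs_mul]; exact neg_le_abs _
  have hFF : F ≤ F*F := by
    have := mul_le_mul_of_nonneg_right hF1.le hF0.le
    linarith only [this]
  have hFF0 : (0:ℝ) ≤ F*F := by positivity
  -- X2 ≤ K * F^2
  have c1 : A*(κ*(F*F)*L) ≤ A*κ*((n:ℝ)/2)*(F*F) := by
    linarith only [mul_le_mul_of_nonneg_left hLle (show (0:ℝ) ≤ A*κ*(F*F) by positivity)]
  have hd1 : (κ-1)*W ≤ |κ-1| *F := by
    linarith only [mul_nonneg (sub_nonneg.mpr habs1) hW0,
      mul_nonneg (abs_nonneg (κ-1)) (sub_nonneg.mpr hWF)]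
  have c2 : A*(κ*(κ-1)*F*W) ≤ A*κ* |κ-1| *(F*F) := by
    linarith only [mul_le_mul_of_nonneg_left hd1 (show (0:ℝ) ≤ A*κ*F by positivity)]
  have hd2 : -((κ-1)*L) ≤ |κ-1| *((n:ℝ)/2 + F) := by
    have h1 : -((κ-1)*L) ≤ |(κ-1)*L| := neg_le_abs _
    rw [abs_mul] at h1
    have h2 := mul_le_mul_of_nonneg_left hLabs (abs_nonneg (κ-1))
    linarith only [h1, h2]
  have c3 : -(B*((κ-1)*F*L)) ≤ B* |κ-1| *((n:ℝ)/2)*(F*F) + B* |κ-1| *(F*F) := by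
    have h3 := mul_le_mul_of_nonneg_left hd2 (show (0:ℝ) ≤ B*F by positivity)
    have h4 := mul_le_mul_of_nonneg_left hFF (show (0:ℝ) ≤ B* |κ-1| *((n:ℝ)/2) by positivity)
    linarith only [h3, h4]
  have hd3 : -((κ-1)*(κ-2)*W) ≤ |κ-1| * |κ-2| *F := by
    linarith only [mul_nonneg (show (0:ℝ) ≤ |κ-1| * |κ-2| + (κ-1)*(κ-2) by linarith only [habs2']) hW0,
      mul_nonneg (mul_nonneg (abs_nonneg (κ-1)) (abs_nonneg (κ-2))) (sub_nonneg.mpr hWF)]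
  have c4 : -(B*((κ-1)*(κ-2)*W)) ≤ B*(|κ-1| * |κ-2|)*(F*F) := by
    have h5 := mul_le_mul_of_nonneg_left hd3 hB.le
    have h6 := mul_le_mul_of_nonneg_left hFF (show (0:ℝ) ≤ B*(|κ-1| * |κ-2|) by positivity)
    linarith only [h5, h6]
  have hX2K : A*(κ*(F*F)*L + κ*(κ-1)*F*W) - B*((κ-1)*F*L + (κ-1)*(κ-2)*W)
      ≤ K*(F*F) := by
    rw [hKdef]; linarith only [c1, c2, c3, c4, hFF0]
  -- the s * X2 bound
  have tf : s * (A*(κ*(F*F)*L + κ*(κ-1)*F*W) - B*((κ-1)*F*L + (κ-1)*(κ-2)*W))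
      ≤ ω/4 * (F*F) := by
    have h1 : s * (A*(κ*(F*F)*L + κ*(κ-1)*F*W) - B*((κ-1)*F*L + (κ-1)*(κ-2)*W))
        ≤ s * (K*(F*F)) := mul_le_mul_of_nonneg_left hX2K hs0
    have h2 : s * (K*(F*F)) ≤ (ω/(4*K)) * (K*(F*F)) :=
      mul_le_mul_of_nonneg_right hsb (by positivity)
    have h3 : (ω/(4*K)) * (K*(F*F)) = ω/4*(F*F) := by
      field_simp
    linarith only [h1, h2, h3]
  -- remaining term bounds
  have hd4 : (κ-1)*W ≤ κ*F := by
    rcases le_or_gt 1 κ with h | h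
    · linarith only [mul_le_mul_of_nonneg_left hWF (show (0:ℝ) ≤ κ-1 by linarith),
        mul_nonneg (show (0:ℝ) ≤ κ-1 by linarith) hF0.le, hF0]
    · linarith only [mul_nonpos_of_nonpos_of_nonneg (show κ-1 ≤ 0 by linarith) hW0,
        mul_pos hκ hF0]
  have ta : A*κ*(κ-1)*F*W ≤ A*(κ*κ)*(F*F) := by
    linarith only [mul_le_mul_of_nonneg_left hd4 (show (0:ℝ) ≤ A*κ*F by positivity)]
  have tb : -(B*(κ-1)*((n:ℝ)/2)*F) ≤ ω/8*(F*F) := by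
    have h1 := mul_le_mul_of_nonneg_right hY1 hF0.le
    have h2 := mul_le_mul_of_nonneg_right habs1' (show (0:ℝ) ≤ B*((n:ℝ)/2)*F by positivity)
    linarith only [h1, h2]
  have tc : -(B*(κ-1)*(κ-2)*W) ≤ ω/8*(F*F) := by
    have h1 := mul_le_mul_of_nonneg_left hd3 hB.le
    have h2 := mul_le_mul_of_nonneg_right hY2 hF0.le
    linarith only [h1, h2]
  have td : 4*Cn*(1+ε)*N*(A*(F*F*F)) ≤ 4*Cn*(1+ε)*SRm*(A*(F*F)) := by
    have h := mul_le_mul_of_nonneg_left hNF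
      (show (0:ℝ) ≤ 4*Cn*(1+ε)*A*(F*F) by positivity)
    linarith only [h]
  have te : (0:ℝ) ≤ 4*Cn*(1+ε)*N*(B*(F*F)) :=
    mul_nonneg (mul_nonneg (by positivity) hN0) (by positivity)
  have tg : A*κ*((n:ℝ)/2) + A*(κ*κ) + 4*Cn*(1+ε)*SRm*A ≤ B - ω := by linarith only [hAB]
  have tg2 := mul_le_mul_of_nonneg_right tg hFF0
  have hωF2 : (0:ℝ) ≤ ω*(F*F) := by positivity
  -- main estimate
  have hmain : (1+s)*(A*(κ*(F*F)*L + κ*(κ-1)*F*W) - B*((κ-1)*F*L + (κ-1)*(κ-2)*W))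
      - (A*κ*(F*F) - B*(κ-1)*F)*W
      + 4*Cn*(1+ε)*N*(A*(F*F*F) - B*(F*F))
      + κ*(A*(F*F*F) - B*(F*F)) ≤ 0 := by
    have hLsub : L = (n:ℝ)/2 - (F - W) := by rw [hLdef, hlap x, hRx]
    have hexp : (1+s)*(A*(κ*(F*F)*L + κ*(κ-1)*F*W) - B*((κ-1)*F*L + (κ-1)*(κ-2)*W))
        - (A*κ*(F*F) - B*(κ-1)*F)*W
        + 4*Cn*(1+ε)*N*(A*(F*F*F) - B*(F*F))
        + κ*(A*(F*F*F) - B*(F*F))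
        = A*κ*((n:ℝ)/2)*(F*F) + A*κ*(κ-1)*F*W - B*(κ-1)*((n:ℝ)/2)*F
          - B*(κ-1)*(κ-2)*W - B*(F*F)
          + 4*Cn*(1+ε)*N*(A*(F*F*F)) - 4*Cn*(1+ε)*N*(B*(F*F))
          + s*(A*(κ*(F*F)*L + κ*(κ-1)*F*W) - B*((κ-1)*F*L + (κ-1)*(κ-2)*W)) := by
      rw [hLsub]; ring
    rw [hexp]
    linarith only [ta, tb, tc, td, te, tf, tg2, hωF2]
  -- conclude
  have hfin : (E*P) * ((1+s)*(A*(κ*(F*F)*L + κ*(κ-1)*F*W) - B*((κ-1)*F*L + (κ-1)*(κ-2)*W))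
      - (A*κ*(F*F) - B*(κ-1)*F)*W
      + 4*Cn*(1+ε)*N*(A*(F*F*F) - B*(F*F))
      + κ*(A*(F*F*F) - B*(F*F))) ≤ 0 :=
    mul_nonpos_of_nonneg_of_nonpos (mul_pos hE hP).le hmain
  linarith only [hfin]
end

section
/- Let (M^n, g, f) be a shrinking gradient Ricci soliton with R ≥ 0, f > 0, 0 ≤ |∇f|²/f ≤ 1, Δ_f f = n/2 - f, and sup_M(f|Rm|) < ∞. Let a, B, C₀ > 0 with B > 4C_n(1+ε)(sup_M f|Rm|)·a + C₀√a. Then for τ₀ sufficiently large (depending on n, M, g, f, C₀, ε, γ, a, B), the function u = a - B/f is a positive supersolution of ∂_τ u ≥ (1 + C_n√u)Δu - ∇_{∇f}u + 4C_n(1+ε)|Rm| u + (C₀/Γ)e^{-τ}√u on the region {(x,τ) : τ ≥ τ₀, γ e^τ < f(x) < Γ e^τ}. -/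
set_option maxHeartbeats 1000000 in
/-- Let `(M^n, g, f)` be a shrinking gradient Ricci soliton with `R ≥ 0`,
`f > 0`, `0 ≤ |∇f|²/f ≤ 1`, `Δ_f f = n/2 - f`, and `sup_M (f|Rm|) < ∞`.  Let
`a, B, C₀ > 0` with `B > 4C_n(1+ε)(sup_M f|Rm|)·a + C₀√a`.  Then for `τ₀`
sufficiently large, `u = a - B/f` is a positive supersolution of
`∂_τ u ≥ (1 + C_n√u)Δu - ∇_{∇f}u + 4C_n(1+ε)|Rm| u + (C₀/Γ)e^{-τ}√u`
on the region `{(x,τ) : τ ≥ τ₀, γ e^τ < f(x) < Γ e^τ}`.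
Here `w2 = |∇f|²`, `lapf = Δf`, and the chain rule gives
`Δu = B Δf/f² - 2B|∇f|²/f³`, `∇_{∇f} u = B |∇f|²/f²`, `∂_τ u = 0`. -/
theorem statement16 (M : Type*) (n : ℕ) (Cn ε γ Γ : ℝ)
    (hCn : 0 < Cn) (hε : ε ∈ Set.Ioo (0 : ℝ) 1) (hγ : 0 < γ) (hΓ : 0 < Γ)
    (f R w2 lapf normRm : M → ℝ) (SRm : ℝ) (hSRm0 : 0 ≤ SRm)
    (hR : ∀ x, 0 ≤ R x) (hfpos : ∀ x, 0 < f x)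
    (hw2 : ∀ x, 0 ≤ w2 x ∧ w2 x ≤ f x)
    (hlap : ∀ x, lapf x = (n : ℝ) / 2 - R x)
    (hfdecomp : ∀ x, R x + w2 x = f x)
    (hRm0 : ∀ x, 0 ≤ normRm x)
    -- `sup_M (f|Rm|) ≤ SRm`
    (hfRm : ∀ x, normRm x * f x ≤ SRm)
    (a B C₀ : ℝ) (ha : 0 < a) (hC₀ : 0 < C₀)
    (hB : 4 * Cn * (1 + ε) * SRm * a + C₀ * Real.sqrt a < B) :
    ∃ τ₀ : ℝ, ∀ (x : M) (τ : ℝ), τ₀ ≤ τ →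
      γ * Real.exp τ < f x → f x < Γ * Real.exp τ →
      -- positivity of the supersolution
      0 < a - B / f x ∧
      -- `0 = ∂_τ u ≥ (1 + C_n√u)Δu - ∇_{∇f}u + 4C_n(1+ε)|Rm|u + (C₀/Γ)e^{-τ}√u`
      (1 + Cn * Real.sqrt (a - B / f x)) *
          (B * lapf x / f x ^ 2 - 2 * B * w2 x / f x ^ 3)
        - B * w2 x / f x ^ 2
        + 4 * Cn * (1 + ε) * normRm x * (a - B / f x)
        + C₀ / Γ * Real.exp (-τ) * Real.sqrt (a - B / f x)
      ≤ 0 := by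
  obtain ⟨hε0, hε1⟩ := hε
  set sa := Real.sqrt a with hsadef
  have hsa0 : 0 < sa := Real.sqrt_pos.mpr ha
  have hB0 : 0 < B := lt_of_lt_of_le (by positivity) hB.le
  set δ := B - (4 * Cn * (1 + ε) * SRm * a + C₀ * sa) with hδdef
  have hδ : 0 < δ := by simp only [hδdef]; linarith
  set K : ℝ := (1 + Cn * sa) * B * n / (2 * δ) with hKdef
  have hK0 : 0 ≤ K := by positivity
  set C : ℝ := max (2 * B / a) (K + 1) with hCdef
  have hC0 : 0 < C := lt_of_lt_of_le (by positivity) (le_max_right _ _)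
  refine ⟨Real.log (C / γ), fun x τ hτ h1 h2 => ?_⟩
  have hFpos : 0 < f x := hfpos x
  have hFC : C < f x := by
    have he : γ * Real.exp (Real.log (C / γ)) = C := by
      rw [Real.exp_log (by positivity)]
      field_simp
    calc C = γ * Real.exp (Real.log (C / γ)) := he.symm
      _ ≤ γ * Real.exp τ := by
          have := Real.exp_le_exp.mpr hτ
          nlinarith [Real.exp_pos τ]
      _ < f x := h1
  have hF1 : 2 * B / a < f x := lt_of_le_of_lt (le_max_left _ _) hFC
  have hF2 : K + 1 ≤ f x := le_of_lt (lt_of_le_of_lt (le_max_right _ _) hFC)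
  have h2B : 2 * B < a * f x := by
    rw [div_lt_iff₀ ha] at hF1; linarith
  have hupos : 0 < a - B / f x := by
    rw [sub_pos, div_lt_iff₀ hFpos]; nlinarith
  refine ⟨hupos, ?_⟩
  set s := Real.sqrt (a - B / f x) with hsdef
  have hs0 : 0 ≤ s := Real.sqrt_nonneg _
  have hule : a - B / f x ≤ a := by
    have : 0 < B / f x := by positivity
    linarith
  have hssa : s ≤ sa := Real.sqrt_le_sqrt hule
  have hW0 : 0 ≤ w2 x := (hw2 x).1
  have hWF : w2 x ≤ f x := (hw2 x).2
  have hRx : R x = f x - w2 x := by linarith [hfdecomp x]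
  rw [hlap x, hRx]
  have hexp : Real.exp (-τ) * f x ≤ Γ := by
    rw [Real.exp_neg]
    rw [inv_mul_eq_div, div_le_iff₀ (Real.exp_pos τ)]
    linarith
  -- Claim A
  have hA : (1 + Cn * s) * (B * ((n : ℝ) / 2 - (f x - w2 x)) / f x ^ 2
        - 2 * B * w2 x / f x ^ 3) - B * w2 x / f x ^ 2
      ≤ (1 + Cn * sa) * B * n / (2 * f x ^ 2) - B / f x := by
    rw [← sub_nonneg]
    have heq : (1 + Cn * sa) * B * n / (2 * f x ^ 2) - B / f x
        - ((1 + Cn * s) * (B * ((n : ℝ) / 2 - (f x - w2 x)) / f x ^ 2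
          - 2 * B * w2 x / f x ^ 3) - B * w2 x / f x ^ 2)
        = (Cn * (sa - s) * B * n * f x / 2 + Cn * s * B * f x * (f x - w2 x)
            + 2 * B * w2 x * (1 + Cn * s)) / f x ^ 3 := by
      field_simp
      ring
    rw [heq]
    apply div_nonneg _ (by positivity)
    have t1 : 0 ≤ Cn * (sa - s) * B * n * f x / 2 := by
      have : 0 ≤ sa - s := by linarith
      positivity
    have t2 : 0 ≤ Cn * s * B * f x * (f x - w2 x) := by
      have : 0 ≤ f x - w2 x := by linarith
      positivity
    have t3 : 0 ≤ 2 * B * w2 x * (1 + Cn * s) := by positivity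
    linarith
  -- Claim B
  have hBt : normRm x * (a - B / f x) ≤ SRm * a / f x := by
    rw [le_div_iff₀ hFpos]
    have hNF : 0 ≤ normRm x * f x := mul_nonneg (hRm0 x) hFpos.le
    calc normRm x * (a - B / f x) * f x = normRm x * f x * (a - B / f x) := by ring
      _ ≤ normRm x * f x * a := mul_le_mul_of_nonneg_left hule hNF
      _ ≤ SRm * a := mul_le_mul_of_nonneg_right (hfRm x) ha.le
  have hBt' : 4 * Cn * (1 + ε) * normRm x * (a - B / f x)
      ≤ 4 * Cn * (1 + ε) * (SRm * a / f x) := by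
    have h4 : 0 ≤ 4 * Cn * (1 + ε) := by positivity
    calc 4 * Cn * (1 + ε) * normRm x * (a - B / f x)
        = 4 * Cn * (1 + ε) * (normRm x * (a - B / f x)) := by ring
      _ ≤ 4 * Cn * (1 + ε) * (SRm * a / f x) := by
          exact mul_le_mul_of_nonneg_left hBt h4
  -- Claim C
  have hCt : C₀ / Γ * Real.exp (-τ) * s ≤ C₀ * sa / f x := by
    rw [div_mul_eq_mul_div, div_mul_eq_mul_div, div_le_div_iff₀ hΓ hFpos]
    have h1' : Real.exp (-τ) * f x * s ≤ Γ * sa :=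
      mul_le_mul hexp hssa hs0 hΓ.le
    calc C₀ * Real.exp (-τ) * s * f x = C₀ * (Real.exp (-τ) * f x * s) := by ring
      _ ≤ C₀ * (Γ * sa) := mul_le_mul_of_nonneg_left h1' hC₀.le
      _ = C₀ * sa * Γ := by ring
  -- Claim D
  have hKey : (1 + Cn * sa) * B * n / 2 ≤ δ * f x := by
    have hδK : δ * K = (1 + Cn * sa) * B * n / 2 := by
      rw [hKdef]; field_simp
    calc (1 + Cn * sa) * B * n / 2 = δ * K := hδK.symm
      _ ≤ δ * (K + 1) := by nlinarith
      _ ≤ δ * f x := mul_le_mul_of_nonneg_left hF2 hδ.le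
  have hE : (1 + Cn * sa) * B * n / (2 * f x ^ 2) - B / f x
      + 4 * Cn * (1 + ε) * (SRm * a / f x) + C₀ * sa / f x ≤ 0 := by
    have heq : (1 + Cn * sa) * B * n / (2 * f x ^ 2) - B / f x
        + 4 * Cn * (1 + ε) * (SRm * a / f x) + C₀ * sa / f x
        = ((1 + Cn * sa) * B * n / 2 - δ * f x) / f x ^ 2 := by
      rw [hδdef]; field_simp; ring
    rw [heq]
    exact div_nonpos_of_nonpos_of_nonneg (by linarith) (by positivity)
  linarith
end
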